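/- For the planar map F_α : ℝ² → ℝ² given by F_α(x, y) = ( (x − α)·((x − α)² + (y − α)²) + α , (y − α)·((x − α)² + (y − α)²) + α ), with α ∈ ℝ: for every (x₀, y₀) ∈ ℝ², the iterates F_α^[k](x₀, y₀) tend to (α, α) as k → ∞ if and only if (x₀ − α)² + (y₀ − α)² < 1. In other words, the domain of attraction of the asymptotically stable steady state (α, α) of the system (x_{k+1}, y_{k+1}) = F_α(x_k, y_k) is exactly the open ball of radius 1 centered at (α, α). -/

import Mathlib

open Filter Topology

theorem planar_map_domain_of_attraction (α : ℝ) :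
    ∀ z : ℝ × ℝ,
      Tendsto (fun k => (fun w : ℝ × ℝ =>
          ((w.1 - α) * ((w.1 - α) ^ 2 + (w.2 - α) ^ 2) + α,
           (w.2 - α) * ((w.1 - α) ^ 2 + (w.2 - α) ^ 2) + α))^[k] z)
        atTop (𝓝 (α, α)) ↔
      (z.1 - α) ^ 2 + (z.2 - α) ^ 2 < 1 := by
  intro z
  set g : ℝ × ℝ → ℝ × ℝ := fun w : ℝ × ℝ =>
      ((w.1 - α) * ((w.1 - α) ^ 2 + (w.2 - α) ^ 2) + α,
       (w.2 - α) * ((w.1 - α) ^ 2 + (w.2 - α) ^ 2) + α) with hg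
  set s : ℝ := (z.1 - α) ^ 2 + (z.2 - α) ^ 2 with hs
  have hs0 : 0 ≤ s := by positivity
  have key : ∀ k, ((g^[k] z).1 - α) ^ 2 + ((g^[k] z).2 - α) ^ 2 = s ^ (3 ^ k) := by
    intro k
    induction k with
    | zero => simp [hs]
    | succ k ih =>
      rw [Function.iterate_succ_apply', pow_succ 3 k, pow_mul, ← ih]
      simp only [hg]
      ring
  constructor
  · intro h
    by_contra hge
    push_neg at hge
    have hcont : Continuous fun w : ℝ × ℝ => (w.1 - α) ^ 2 + (w.2 - α) ^ 2 := by continuity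
    have hc : Tendsto (fun k => ((g^[k] z).1 - α) ^ 2 + ((g^[k] z).2 - α) ^ 2) atTop (𝓝 0) := by
      have := (hcont.tendsto (α, α)).comp h
      simpa [Function.comp_def] using this
    simp only [key] at hc
    have hev : ∀ᶠ k in atTop, s ^ (3 ^ k) < 1 :=
      hc.eventually_lt_const zero_lt_one
    obtain ⟨k, hk⟩ := hev.exists
    have : (1 : ℝ) ≤ s ^ (3 ^ k) := one_le_pow₀ hge
    linarith
  · intro hlt
    have h1 : Tendsto (fun n : ℕ => s ^ n) atTop (𝓝 0) :=
      tendsto_pow_atTop_nhds_zero_of_lt_one hs0 hlt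
    have h2 : Tendsto (fun k : ℕ => 3 ^ k) atTop atTop :=
      tendsto_pow_atTop_atTop_of_one_lt (by norm_num)
    have hsq : Tendsto (fun k => s ^ (3 ^ k)) atTop (𝓝 0) := h1.comp h2
    have coord : ∀ (f : ℕ → ℝ), (∀ k, (f k - α) ^ 2 ≤ s ^ (3 ^ k)) →
        Tendsto f atTop (𝓝 α) := by
      intro f hf
      have hsq2 : Tendsto (fun k => (f k - α) ^ 2) atTop (𝓝 0) :=
        squeeze_zero (fun k => sq_nonneg _) hf hsq
      have habs : Tendsto (fun k => |f k - α|) atTop (𝓝 0) := by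
        have := (Real.continuous_sqrt.tendsto 0).comp hsq2
        simpa [Function.comp_def, Real.sqrt_sq_eq_abs] using this
      have hz : Tendsto (fun k => f k - α) atTop (𝓝 0) := by
        rw [tendsto_zero_iff_abs_tendsto_zero]; exact habs
      have := hz.add_const α
      simpa using this
    have ha : Tendsto (fun k => (g^[k] z).1) atTop (𝓝 α) := by
      refine coord _ fun k => ?_
      rw [← key k]; nlinarith [sq_nonneg ((g^[k] z).2 - α)]
    have hb : Tendsto (fun k => (g^[k] z).2) atTop (𝓝 α) := by
      refine coord _ fun k => ?_
      rw [← key k]; nlinarith [sq_nonneg ((g^[k] z).1 - α)]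
    have := ha.prodMk_nhds hb
    simpa using this
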